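/- Let D : X → (0,1) be measurable, let δ ≥ 0 and M ≥ 0, and assume h_θ(D, D_θ)² ≤ δ², ∫ (D_θ/D) dP₀ ≤ M, and that log(D/D_θ) is P₀-integrable. Then |∫ log(D/D_θ) dP₀| ≤ 2 · max(1, √M) · δ. -/

import Mathlib

open MeasureTheory Real ENNReal

private lemma log_div_le_sqrt {a b : ℝ} (ha : 0 < a) (hb : 0 < b) :
    Real.log (a / b) ≤ 2 * ((Real.sqrt a - Real.sqrt b) / Real.sqrt b) := by
  have hsa := Real.sqrt_pos.mpr ha
  have hsb := Real.sqrt_pos.mpr hb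
  have h1 : Real.log (a / b) = 2 * Real.log (Real.sqrt a / Real.sqrt b) := by
    rw [Real.log_div hsa.ne' hsb.ne', Real.log_sqrt ha.le, Real.log_sqrt hb.le,
      Real.log_div ha.ne' hb.ne']
    ring
  have h2 := Real.log_le_sub_one_of_pos (div_pos hsa hsb)
  have h3 : Real.sqrt a / Real.sqrt b - 1 = (Real.sqrt a - Real.sqrt b) / Real.sqrt b := by
    field_simp
  rw [h1]; rw [h3] at h2; linarith

private lemma cs_lintegral {X : Type*} [MeasurableSpace X] (ν : Measure X)
    {f g : X → ℝ≥0∞} (hf : Measurable f) (hg : Measurable g) :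
    ∫⁻ x, f x * g x ∂ν ≤
      (∫⁻ x, f x ^ (2:ℝ) ∂ν) ^ (1/2:ℝ) * (∫⁻ x, g x ^ (2:ℝ) ∂ν) ^ (1/2:ℝ) := by
  have hpq : Real.HolderConjugate 2 2 := Real.HolderConjugate.two_two
  simpa using ENNReal.lintegral_mul_le_Lp_mul_Lq ν hpq hf.aemeasurable hg.aemeasurable

private lemma rpow_half_ofReal_sq {c : ℝ} (hc : 0 ≤ c) :
    (ENNReal.ofReal (c ^ 2)) ^ (1/2 : ℝ) = ENNReal.ofReal c := by
  rw [ENNReal.ofReal_pow hc, ← ENNReal.rpow_natCast (ENNReal.ofReal c) 2,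
    ← ENNReal.rpow_mul]
  norm_num

/-- If `h_θ(D, D_θ)² ≤ δ²`, `∫ (D_θ/D) dP₀ ≤ M` and `log(D/D_θ)` is `P₀`-integrable,
then `|∫ log(D/D_θ) dP₀| ≤ 2 max(1, √M) δ`. -/
theorem abs_integral_log_ratio_discriminator_le
    {X : Type*} [MeasurableSpace X] (μ : Measure X) [SigmaFinite μ]
    (p₀ pθ : X → ℝ) (hp₀ : Measurable p₀) (hpθ : Measurable pθ)
    (hp₀nn : ∀ x, 0 ≤ p₀ x) (hpθnn : ∀ x, 0 ≤ pθ x)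
    (hp₀den : ∫⁻ x, ENNReal.ofReal (p₀ x) ∂μ = 1)
    (hpθden : ∫⁻ x, ENNReal.ofReal (pθ x) ∂μ = 1)
    (P₀ Pθ : Measure X)
    (hP₀ : P₀ = μ.withDensity fun x => ENNReal.ofReal (p₀ x))
    (hPθ : Pθ = μ.withDensity fun x => ENNReal.ofReal (pθ x))
    (Dθ : X → ℝ) (hDθ : Measurable Dθ)
    (hDθ_def : ∀ x, 0 < p₀ x + pθ x → Dθ x = p₀ x / (p₀ x + pθ x))
    (D : X → ℝ) (hD : Measurable D) (hD_mem : ∀ x, 0 < D x ∧ D x < 1)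
    (δ M : ℝ) (hδ : 0 ≤ δ) (hM : 0 ≤ M)
    (hhel : ∫⁻ x, ENNReal.ofReal ((Real.sqrt (D x) - Real.sqrt (Dθ x)) ^ 2) ∂(P₀ + Pθ) ≤
      ENNReal.ofReal (δ ^ 2))
    (hratio : ∫⁻ x, ENNReal.ofReal (Dθ x / D x) ∂P₀ ≤ ENNReal.ofReal M)
    (hint : Integrable (fun x => Real.log (D x / Dθ x)) P₀) :
    |∫ x, Real.log (D x / Dθ x) ∂P₀| ≤ 2 * max 1 (Real.sqrt M) * δ := by
  have hp₀e : Measurable fun x => ENNReal.ofReal (p₀ x) := hp₀.ennreal_ofReal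
  have hpθe : Measurable fun x => ENNReal.ofReal (pθ x) := hpθ.ennreal_ofReal
  set s : X → ℝ := fun x => Real.sqrt (D x) with hs_def
  set t : X → ℝ := fun x => Real.sqrt (Dθ x) with ht_def
  have hs_m : Measurable s := hD.sqrt
  have ht_m : Measurable t := hDθ.sqrt
  set g₁ : X → ℝ≥0∞ := fun x => ENNReal.ofReal (|s x - t x| / t x) with hg₁_def
  set g₂ : X → ℝ≥0∞ := fun x => ENNReal.ofReal (t x / s x) with hg₂_def
  have hg₁m : Measurable g₁ := ((hs_m.sub ht_m).abs.div ht_m).ennreal_ofReal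
  have hg₂m : Measurable g₂ := (ht_m.div hs_m).ennreal_ofReal
  -- P₀ is a probability measure
  have hP0univ : P₀ Set.univ = 1 := by
    rw [hP₀, withDensity_apply _ MeasurableSet.univ, setLIntegral_univ, hp₀den]
  -- a.e. positivity of p₀
  have hpos : ∀ᵐ x ∂P₀, 0 < p₀ x := by
    rw [hP₀]
    refine (ae_withDensity_iff hp₀e).mpr (ae_of_all _ fun x hx => ?_)
    by_contra h
    exact hx (by simp [ENNReal.ofReal_eq_zero.mpr (not_lt.mp h)])
  -- a.e. facts about Dθ
  have hDθae : ∀ᵐ x ∂P₀, 0 < Dθ x := by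
    filter_upwards [hpos] with x hx
    have hsx : 0 < p₀ x + pθ x := by linarith [hpθnn x]
    rw [hDθ_def x hsx]
    positivity
  -- μ-level Hellinger bound
  have hsqm : Measurable fun x => ENNReal.ofReal ((s x - t x) ^ 2) :=
    ((hs_m.sub ht_m).pow_const 2).ennreal_ofReal
  have hH : ∫⁻ x, ENNReal.ofReal ((s x - t x) ^ 2 * (p₀ x + pθ x)) ∂μ
      ≤ ENNReal.ofReal (δ ^ 2) := by
    refine le_trans (le_of_eq ?_) hhel
    rw [lintegral_add_measure, hP₀, hPθ,
      lintegral_withDensity_eq_lintegral_mul μ hp₀e hsqm,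
      lintegral_withDensity_eq_lintegral_mul μ hpθe hsqm]
    simp only [Pi.mul_apply]
    rw [← lintegral_add_left (f := fun a => ENNReal.ofReal (p₀ a) * ENNReal.ofReal ((s a - t a) ^ 2)) (hp₀e.mul hsqm)]
    refine lintegral_congr fun x => ?_
    rw [← add_mul, ← ENNReal.ofReal_add (hp₀nn x) (hpθnn x),
      ← ENNReal.ofReal_mul (add_nonneg (hp₀nn x) (hpθnn x))]
    ring_nf
  -- E1 : second moment of g₁
  have E1 : ∫⁻ x, g₁ x ^ (2:ℝ) ∂P₀ ≤ ENNReal.ofReal (δ ^ 2) := by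
    refine le_trans ?_ hH
    rw [hP₀, lintegral_withDensity_eq_lintegral_mul μ hp₀e (hg₁m.pow_const _)]
    refine lintegral_mono fun x => ?_
    simp only [Pi.mul_apply]
    rcases le_or_gt (p₀ x) 0 with hx | hx
    · simp [ENNReal.ofReal_eq_zero.mpr hx]
    · have hsx : 0 < p₀ x + pθ x := by linarith [hpθnn x]
      have hDθx : 0 < Dθ x := by rw [hDθ_def x hsx]; positivity
      have htx : 0 < t x := Real.sqrt_pos.mpr hDθx
      have h1 : g₁ x ^ (2:ℝ) = ENNReal.ofReal ((s x - t x) ^ 2 / Dθ x) := by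
        rw [hg₁_def]
        rw [ENNReal.ofReal_rpow_of_nonneg (by positivity) (by norm_num)]
        congr 1
        rw [show ((2:ℝ)) = ((2:ℕ):ℝ) by norm_num, Real.rpow_natCast]
        rw [div_pow, sq_abs, Real.sq_sqrt hDθx.le]
      rw [h1, ← ENNReal.ofReal_mul (hp₀nn x)]
      refine ENNReal.ofReal_le_ofReal (le_of_eq ?_)
      have hDθx' : Dθ x = p₀ x / (p₀ x + pθ x) := hDθ_def x hsx
      rw [hDθx']
      field_simp
  -- E2 : second moment of g₂
  have E2 : ∫⁻ x, g₂ x ^ (2:ℝ) ∂P₀ ≤ ENNReal.ofReal M := by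
    refine le_trans (le_of_eq ?_) hratio
    refine lintegral_congr_ae ?_
    filter_upwards [hDθae] with x hx
    have hDx := (hD_mem x).1
    have hsx : 0 < s x := Real.sqrt_pos.mpr hDx
    rw [hg₂_def, ENNReal.ofReal_rpow_of_nonneg (by positivity) (by norm_num)]
    congr 1
    rw [show ((2:ℝ)) = ((2:ℕ):ℝ) by norm_num, Real.rpow_natCast]
    rw [div_pow, Real.sq_sqrt hx.le, Real.sq_sqrt hDx.le]
  -- Cauchy–Schwarz bounds
  have LA : ∫⁻ x, g₁ x ∂P₀ ≤ ENNReal.ofReal δ := by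
    have h := cs_lintegral P₀ hg₁m (measurable_const (a := (1:ℝ≥0∞)))
    simp only [mul_one, ENNReal.one_rpow, lintegral_one, hP0univ] at h
    refine h.trans ?_
    rw [← rpow_half_ofReal_sq hδ]
    exact ENNReal.rpow_le_rpow E1 (by norm_num)
  have LB : ∫⁻ x, g₁ x * g₂ x ∂P₀ ≤ ENNReal.ofReal δ * ENNReal.ofReal (Real.sqrt M) := by
    refine (cs_lintegral P₀ hg₁m hg₂m).trans ?_
    refine mul_le_mul' ?_ ?_
    · rw [← rpow_half_ofReal_sq hδ]
      exact ENNReal.rpow_le_rpow E1 (by norm_num)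
    · rw [← rpow_half_ofReal_sq (Real.sqrt_nonneg M), Real.sq_sqrt hM]
      exact ENNReal.rpow_le_rpow E2 (by norm_num)
  -- pointwise a.e. bounds on log
  have hptA : ∀ᵐ x ∂P₀, ENNReal.ofReal (Real.log (D x / Dθ x)) ≤ 2 * g₁ x := by
    filter_upwards [hDθae] with x hx
    have hDx := (hD_mem x).1
    have htx : 0 < t x := Real.sqrt_pos.mpr hx
    have h1 : Real.log (D x / Dθ x) ≤ 2 * (|s x - t x| / t x) := by
      refine (log_div_le_sqrt hDx hx).trans ?_
      have : s x - t x ≤ |s x - t x| := le_abs_self _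
      gcongr
    calc ENNReal.ofReal (Real.log (D x / Dθ x))
        ≤ ENNReal.ofReal (2 * (|s x - t x| / t x)) := ENNReal.ofReal_le_ofReal h1
      _ = 2 * g₁ x := by
          rw [ENNReal.ofReal_mul (by norm_num : (0:ℝ) ≤ 2)]
          simp [hg₁_def]
  have hptB : ∀ᵐ x ∂P₀, ENNReal.ofReal (-Real.log (D x / Dθ x)) ≤ 2 * (g₁ x * g₂ x) := by
    filter_upwards [hDθae] with x hx
    have hDx := (hD_mem x).1
    have htx : 0 < t x := Real.sqrt_pos.mpr hx
    have hsx : 0 < s x := Real.sqrt_pos.mpr hDx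
    have hneg : -Real.log (D x / Dθ x) = Real.log (Dθ x / D x) := by
      rw [← Real.log_inv, inv_div]
    have h1 : Real.log (Dθ x / D x) ≤ 2 * (|s x - t x| / t x * (t x / s x)) := by
      refine (log_div_le_sqrt hx hDx).trans ?_
      have h2 : t x - s x ≤ |s x - t x| := by
        rw [abs_sub_comm]; exact le_abs_self _
      have h3 : |s x - t x| / t x * (t x / s x) = |s x - t x| / s x := by
        field_simp
      rw [h3]
      gcongr
    rw [hneg]
    calc ENNReal.ofReal (Real.log (Dθ x / D x))
        ≤ ENNReal.ofReal (2 * (|s x - t x| / t x * (t x / s x))) :=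
          ENNReal.ofReal_le_ofReal h1
      _ = 2 * (g₁ x * g₂ x) := by
          rw [ENNReal.ofReal_mul (by norm_num : (0:ℝ) ≤ 2),
            ENNReal.ofReal_mul (by positivity)]
          simp [hg₁_def, hg₂_def]
  -- lintegral bounds for positive and negative parts
  have hA : ∫⁻ x, ENNReal.ofReal (Real.log (D x / Dθ x)) ∂P₀ ≤ ENNReal.ofReal (2 * δ) := by
    calc ∫⁻ x, ENNReal.ofReal (Real.log (D x / Dθ x)) ∂P₀
        ≤ ∫⁻ x, 2 * g₁ x ∂P₀ := lintegral_mono_ae hptA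
      _ = 2 * ∫⁻ x, g₁ x ∂P₀ := lintegral_const_mul 2 hg₁m
      _ ≤ 2 * ENNReal.ofReal δ := by gcongr
      _ = ENNReal.ofReal (2 * δ) := by
          rw [ENNReal.ofReal_mul (by norm_num : (0:ℝ) ≤ 2)]
          norm_num
  have hB : ∫⁻ x, ENNReal.ofReal (-Real.log (D x / Dθ x)) ∂P₀
      ≤ ENNReal.ofReal (2 * (Real.sqrt M * δ)) := by
    calc ∫⁻ x, ENNReal.ofReal (-Real.log (D x / Dθ x)) ∂P₀
        ≤ ∫⁻ x, 2 * (g₁ x * g₂ x) ∂P₀ := lintegral_mono_ae hptB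
      _ = 2 * ∫⁻ x, g₁ x * g₂ x ∂P₀ := lintegral_const_mul 2 (hg₁m.mul hg₂m)
      _ ≤ 2 * (ENNReal.ofReal δ * ENNReal.ofReal (Real.sqrt M)) := by gcongr
      _ = ENNReal.ofReal (2 * (Real.sqrt M * δ)) := by
          rw [← ENNReal.ofReal_mul hδ, ENNReal.ofReal_mul (by norm_num : (0:ℝ) ≤ 2)]
          rw [mul_comm δ]
          norm_num
  -- assemble
  have hI := integral_eq_lintegral_pos_part_sub_lintegral_neg_part hint
  set A := ∫⁻ x, ENNReal.ofReal (Real.log (D x / Dθ x)) ∂P₀ with hA_def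
  set B := ∫⁻ x, ENNReal.ofReal (-Real.log (D x / Dθ x)) ∂P₀ with hB_def
  have hAr : A.toReal ≤ 2 * δ := ENNReal.toReal_le_of_le_ofReal (by positivity) hA
  have hBr : B.toReal ≤ 2 * (Real.sqrt M * δ) :=
    ENNReal.toReal_le_of_le_ofReal (by positivity) hB
  have hmax1 : (1:ℝ) ≤ max 1 (Real.sqrt M) := le_max_left _ _
  have hmax2 : Real.sqrt M ≤ max 1 (Real.sqrt M) := le_max_right _ _
  rw [hI, abs_le]
  have k1 : 1 * δ ≤ max 1 (Real.sqrt M) * δ := mul_le_mul_of_nonneg_right hmax1 hδ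
  have k2 : Real.sqrt M * δ ≤ max 1 (Real.sqrt M) * δ := mul_le_mul_of_nonneg_right hmax2 hδ
  constructor
  · nlinarith [ENNReal.toReal_nonneg (a := A), ENNReal.toReal_nonneg (a := B)]
  · nlinarith [ENNReal.toReal_nonneg (a := A), ENNReal.toReal_nonneg (a := B)]
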